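/- Let D₁ be a t-structure on a triangulated category D with heart H₁. Torsion pairs (T, F) in H₁ are in bijection with t-structures D₂ on D satisfying D₁^{≤0} ⊆ D₂^{≤0} ⊆ D₁^{≤1}, via D₂^{≤0} = D₁^{≤0} ∗ Σ⁻¹T and D₂^{≥1} = Σ⁻¹F ∗ D₁^{≥2}. -/

import Mathlib

open CategoryTheory Category Limits Pretriangulated Triangulated

variable {C : Type*} [Category C] [Preadditive C] [HasZeroObject C] [HasShift C ℤ]
  [∀ (n : ℤ), (shiftFunctor C n).Additive] [Pretriangulated C] [IsTriangulated C]

/-- `ExtStar S T` is the class of objects `Z` fitting in a distinguished triangle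
`A → Z → B → A⟦1⟧` with `A ∈ S` and `B ∈ T`. -/
def ExtStar (S T : C → Prop) : C → Prop := fun Z =>
  ∃ (A B : C) (_ : S A) (_ : T B) (f : A ⟶ Z) (g : Z ⟶ B) (h : B ⟶ A⟦(1 : ℤ)⟧),
    Triangle.mk f g h ∈ distTriang C

/-- The heart of a t-structure, as a class of objects. -/
def heartProp (t : TStructure C) : C → Prop := fun X => t.le 0 X ∧ t.ge 0 X

/-- A torsion pair in the heart of `t`: two iso-closed classes of objects of the
heart with `Hom(T,F) = 0` such that every object `M` of the heart sits in a
short exact sequence `0 → T_M → M → F_M → 0` (equivalently, a distinguished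
triangle `T_M → M → F_M → T_M⟦1⟧`) with `T_M ∈ T`, `F_M ∈ F`. -/
def IsTorsionPair (t : TStructure C) (T F : C → Prop) : Prop :=
  (∀ X, T X → heartProp t X) ∧ (∀ X, F X → heartProp t X) ∧
  ObjectProperty.IsClosedUnderIsomorphisms T ∧ ObjectProperty.IsClosedUnderIsomorphisms F ∧
  (∀ (A B : C) (f : A ⟶ B), T A → F B → f = 0) ∧
  (∀ (M : C), heartProp t M →
    ∃ (TM FM : C) (_ : T TM) (_ : F FM)
      (f : TM ⟶ M) (g : M ⟶ FM) (h : FM ⟶ TM⟦(1 : ℤ)⟧),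
      Triangle.mk f g h ∈ distTriang C)

open ZeroObject

set_option linter.unusedSectionVars false
set_option linter.unusedVariables false
set_option maxHeartbeats 1000000

namespace HRSAux

lemma shift_eq_zero_iff {X Y : C} (f : X ⟶ Y) (n : ℤ) : f⟦n⟧' = 0 ↔ f = 0 :=
  Functor.map_eq_zero_iff _

section general

variable (t : TStructure C)

lemma t_zero {a b : ℤ} (hab : a < b) {X Y : C} (f : X ⟶ Y)
    (hX : t.le a X) (hY : t.ge b Y) : f = 0 := by
  have h1 : t.le 0 (X⟦a⟧) := t.le_shift a a 0 (by omega) X hX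
  have h2 : t.ge 1 (Y⟦a⟧) := t.ge_antitone (show (1:ℤ) ≤ b - a by omega) _
    (t.ge_shift b a (b - a) (by omega) Y hY)
  rw [← shift_eq_zero_iff f a]
  exact t.zero' _ h1 h2

lemma le_of_isZero (n : ℤ) {X : C} (h : IsZero X) : t.le n X := by
  obtain ⟨A, B, hA, hB, f, g, w, mem⟩ := t.exists_triangle X n (n+1) rfl
  have hf : f = 0 := h.eq_of_tgt _ _
  obtain ⟨φ, hφ⟩ := Triangle.coyoneda_exact₂ _ (inv_rot_of_distTriang _ mem) (𝟙 A)
    ((id_comp _).trans hf)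
  have : φ = 0 := t_zero t (show n < n + 2 by omega) φ hA
    (t.ge_shift (n+1) (-1) (n+2) (by omega) B hB)
  have hA0 : IsZero A := by
    rw [IsZero.iff_id_eq_zero, hφ, this, zero_comp]; rfl
  exact ObjectProperty.prop_of_iso (t.le n) (hA0.iso h) hA

lemma ge_of_isZero (n : ℤ) {X : C} (h : IsZero X) : t.ge n X := by
  obtain ⟨A, B, hA, hB, f, g, w, mem⟩ := t.exists_triangle X (n-1) n (by omega)
  have hg : g = 0 := h.eq_of_src _ _
  obtain ⟨φ, hφ⟩ := Triangle.yoneda_exact₂ _ (rot_of_distTriang _ mem) (𝟙 B)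
    ((comp_id _).trans hg)
  have : φ = 0 := t_zero t (show n - 2 < n by omega) φ
    (t.le_shift (n-1) 1 (n-2) (by omega) A hA) hB
  have hB0 : IsZero B := by
    rw [IsZero.iff_id_eq_zero, hφ, this, comp_zero]; rfl
  exact ObjectProperty.prop_of_iso (t.ge n) (hB0.iso h) hB

lemma le_iff_orth (n : ℤ) (X : C) :
    t.le n X ↔ ∀ (Y : C), t.ge (n+1) Y → ∀ (f : X ⟶ Y), f = 0 := by
  constructor
  · intro hX Y hY f
    exact t_zero t (by omega) f hX hY
  · intro H
    obtain ⟨A, B, hA, hB, f, g, w, mem⟩ := t.exists_triangle X n (n+1) rfl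
    have hg : g = 0 := H B hB g
    obtain ⟨φ, hφ⟩ := Triangle.yoneda_exact₂ _ (rot_of_distTriang _ mem) (𝟙 B)
      ((comp_id _).trans hg)
    have hφ0 : φ = 0 := t_zero t (show n - 1 < n + 1 by omega) φ
      (t.le_shift n 1 (n-1) (by omega) A hA) hB
    have hB0 : IsZero B := by rw [IsZero.iff_id_eq_zero, hφ, hφ0, comp_zero]; rfl
    have : IsIso f := (Triangle.isZero₃_iff_isIso₁ _ mem).1 hB0
    exact ObjectProperty.prop_of_isIso (t.le n) f hA

lemma ge_iff_orth (n : ℤ) (Y : C) :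
    t.ge n Y ↔ ∀ (X : C), t.le (n-1) X → ∀ (f : X ⟶ Y), f = 0 := by
  constructor
  · intro hY X hX f
    exact t_zero t (by omega) f hX hY
  · intro H
    obtain ⟨A, B, hA, hB, f, g, w, mem⟩ := t.exists_triangle Y (n-1) n (by omega)
    have hf : f = 0 := H A hA f
    obtain ⟨φ, hφ⟩ := Triangle.coyoneda_exact₂ _ (inv_rot_of_distTriang _ mem) (𝟙 A)
      ((id_comp _).trans hf)
    have hφ0 : φ = 0 := t_zero t (show n - 1 < n + 1 by omega) φ hA
      (t.ge_shift n (-1) (n+1) (by omega) B hB)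
    have hA0 : IsZero A := by rw [IsZero.iff_id_eq_zero, hφ, hφ0, zero_comp]; rfl
    have : IsIso g := (Triangle.isZero₁_iff_isIso₂ _ mem).1 hA0
    exact ObjectProperty.prop_of_iso (t.ge n) (asIso g).symm hB

lemma le_ext₂ (n : ℤ) {T : Triangle C} (hT : T ∈ distTriang C)
    (h₁ : t.le n T.obj₁) (h₃ : t.le n T.obj₃) : t.le n T.obj₂ := by
  rw [le_iff_orth]
  intro Y hY f
  obtain ⟨φ, hφ⟩ := Triangle.yoneda_exact₂ _ hT f (t_zero t (by omega) _ h₁ hY)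
  rw [hφ, t_zero t (by omega) φ h₃ hY, comp_zero]

lemma ge_ext₂ (n : ℤ) {T : Triangle C} (hT : T ∈ distTriang C)
    (h₁ : t.ge n T.obj₁) (h₃ : t.ge n T.obj₃) : t.ge n T.obj₂ := by
  rw [ge_iff_orth]
  intro X hX f
  obtain ⟨φ, hφ⟩ := Triangle.coyoneda_exact₂ _ hT f (t_zero t (by omega) _ hX h₃)
  rw [hφ, t_zero t (by omega) φ hX h₁, zero_comp]

lemma tstructure_ext {t t' : TStructure C} (h : t.le = t'.le) (h' : t.ge = t'.ge) :
    t = t' := by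
  cases t; cases t'
  dsimp at h h'
  subst h h'
  rfl

lemma tstructure_ext_of_le {t t' : TStructure C} (h : t.le = t'.le) : t = t' := by
  refine tstructure_ext h ?_
  funext n Y
  rw [eq_iff_iff, ge_iff_orth, ge_iff_orth, h]

lemma extStar_triangle (S T : C → Prop) {Tr : Triangle C} (hTr : Tr ∈ distTriang C)
    (h1 : S Tr.obj₁) (h3 : T Tr.obj₃) : ExtStar S T Tr.obj₂ :=
  ⟨Tr.obj₁, Tr.obj₃, h1, h3, Tr.mor₁, Tr.mor₂, Tr.mor₃, hTr⟩

instance extStar_closed (S T : C → Prop) : ObjectProperty.IsClosedUnderIsomorphisms (ExtStar S T) where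
  of_iso {X Y} e := by
    rintro ⟨A, B, hA, hB, f, g, h, mem⟩
    refine ⟨A, B, hA, hB, f ≫ e.hom, e.inv ≫ g, h, ?_⟩
    refine isomorphic_distinguished _ mem _ ?_
    exact Triangle.isoMk _ _ (Iso.refl A) e.symm (Iso.refl B) (by show (f ≫ e.hom) ≫ e.inv = 𝟙 A ≫ f; simp)
      (by show (e.inv ≫ g) ≫ 𝟙 B = e.inv ≫ g; simp)
      (by show h ≫ (shiftFunctor C (1:ℤ)).map (𝟙 A) = 𝟙 B ≫ h; simp)

instance closed_shiftpred (P : C → Prop) [ObjectProperty.IsClosedUnderIsomorphisms P] (n : ℤ) :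
    ObjectProperty.IsClosedUnderIsomorphisms (fun X => P (X⟦n⟧)) where
  of_iso {X Y} e hX := ObjectProperty.prop_of_iso P ((shiftFunctor C n).mapIso e) hX

end general

section torsion

variable (t : TStructure C) (T F : C → Prop) (hTF : IsTorsionPair t T F)

/-- candidate aisle -/
def PP : C → Prop := ExtStar (t.le 0) (fun Y => T (Y⟦(1:ℤ)⟧))

/-- candidate co-aisle -/
def QQ : C → Prop := ExtStar (fun Y => F (Y⟦(1:ℤ)⟧)) (t.ge 2)

instance : ObjectProperty.IsClosedUnderIsomorphisms (PP t T) := by unfold PP; infer_instance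
instance : ObjectProperty.IsClosedUnderIsomorphisms (QQ t F) := by unfold QQ; infer_instance

section withTF

include hTF

lemma torsion_zero {X : C} (h : IsZero X) : T X := by
  haveI instT := hTF.2.2.1
  haveI instF := hTF.2.2.2.1
  obtain ⟨TM, FM, hTM, hFM, f, g, w, md⟩ := hTF.2.2.2.2.2 0
    ⟨le_of_isZero t 0 (isZero_zero C), ge_of_isZero t 0 (isZero_zero C)⟩
  have hg : g = 0 := (isZero_zero C).eq_of_src _ _
  have hf : f = 0 := (isZero_zero C).eq_of_tgt _ _
  have : IsIso w := by
    have := Triangle.isZero₂_iff_isIso₃ _ md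
    exact this.1 (isZero_zero C)
  have hw0 : inv w = 0 := by
    refine t_zero t (show (-1:ℤ) < 0 by omega) _ ?_ (hTF.2.1 FM hFM).2
    exact t.le_shift 0 1 (-1) (by omega) TM (hTF.1 TM hTM).1
  have hFM0 : IsZero FM := by
    rw [IsZero.iff_id_eq_zero, ← IsIso.hom_inv_id w, hw0, comp_zero]
  have hTM0 : IsZero TM := by
    have h1 : IsZero (TM⟦(1:ℤ)⟧) := by
      rw [IsZero.iff_id_eq_zero, ← IsIso.inv_hom_id w, hw0, zero_comp]
    have h2 : IsZero (TM⟦(1:ℤ)⟧⟦(-1:ℤ)⟧) := (shiftFunctor C (-1:ℤ)).map_isZero h1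
    exact h2.of_iso ((shiftFunctorCompIsoId C (1:ℤ) (-1) (by omega)).app TM).symm
  exact ObjectProperty.prop_of_iso T (hTM0.iso h) hTM

lemma cotorsion_zero {X : C} (h : IsZero X) : F X := by
  haveI instT := hTF.2.2.1
  haveI instF := hTF.2.2.2.1
  obtain ⟨TM, FM, hTM, hFM, f, g, w, md⟩ := hTF.2.2.2.2.2 0
    ⟨le_of_isZero t 0 (isZero_zero C), ge_of_isZero t 0 (isZero_zero C)⟩
  have : IsIso w := (Triangle.isZero₂_iff_isIso₃ _ md).1 (isZero_zero C)
  have hw0 : inv w = 0 := by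
    refine t_zero t (show (-1:ℤ) < 0 by omega) _ ?_ (hTF.2.1 FM hFM).2
    exact t.le_shift 0 1 (-1) (by omega) TM (hTF.1 TM hTM).1
  have hFM0 : IsZero FM := by
    rw [IsZero.iff_id_eq_zero, ← IsIso.hom_inv_id w, hw0, comp_zero]
  exact ObjectProperty.prop_of_iso F (hFM0.iso h) hFM

lemma le0_subset_PP {X : C} (hX : t.le 0 X) : PP t T X := by
  haveI instT := hTF.2.2.1
  exact extStar_triangle _ _ (contractible_distinguished X) hX
    (torsion_zero t T F hTF ((shiftFunctor C (1:ℤ)).map_isZero (isZero_zero C)))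

lemma ge2_subset_QQ {X : C} (hX : t.ge 2 X) : QQ t F X := by
  haveI instF := hTF.2.2.2.1
  exact extStar_triangle _ _ (contractible_distinguished₁ X)
    (cotorsion_zero t T F hTF ((shiftFunctor C (1:ℤ)).map_isZero (isZero_zero C))) hX

lemma hom_PP_QQ {X Y : C} (hX : PP t T X) (hY : QQ t F Y) (f : X ⟶ Y) : f = 0 := by
  obtain ⟨A, B, hA, hB, a, b, c, memX⟩ := hX
  obtain ⟨A', B', hA', hB', a', b', c', memY⟩ := hY
  have hA'G1 : t.ge 1 A' := by
    refine ObjectProperty.prop_of_iso (t.ge 1) ((shiftFunctorCompIsoId C (1:ℤ) (-1) (by omega)).app A') ?_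
    exact t.ge_shift 0 (-1) 1 (by omega) _ (hTF.2.1 _ hA').2
  have hBL1 : t.le 1 B := by
    refine ObjectProperty.prop_of_iso (t.le 1) ((shiftFunctorCompIsoId C (1:ℤ) (-1) (by omega)).app B) ?_
    exact t.le_shift 0 (-1) 1 (by omega) _ (hTF.1 _ hB).1
  have hAY : ∀ g : A ⟶ Y, g = 0 := by
    intro g
    obtain ⟨φ, hφ⟩ := Triangle.coyoneda_exact₂ _ memY g
      (t_zero t (show (0:ℤ) < 2 by omega) _ hA hB')
    rw [hφ, t_zero t (show (0:ℤ) < 1 by omega) φ hA hA'G1, zero_comp]; rfl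
  have hBY : ∀ g : B ⟶ Y, g = 0 := by
    intro g
    obtain ⟨φ, hφ⟩ := Triangle.coyoneda_exact₂ _ memY g
      (t_zero t (show (1:ℤ) < 2 by omega) _ hBL1 hB')
    have hφ0 : φ = 0 := by
      rw [← shift_eq_zero_iff φ 1]
      exact hTF.2.2.2.2.1 _ _ _ hB hA'
    rw [hφ, hφ0, zero_comp]; rfl
  obtain ⟨ψ, hψ⟩ := Triangle.yoneda_exact₂ _ memX f (hAY _)
  rw [hψ, hBY ψ] ; exact comp_zero

lemma PP_shift_one {Z : C} (hZ : PP t T Z) : PP t T (Z⟦(1:ℤ)⟧) := by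
  obtain ⟨A, B, hA, hB, a, b, c, mem⟩ := hZ
  refine le0_subset_PP t T F hTF ?_
  have sh := Triangle.shift_distinguished _ mem 1
  refine le_ext₂ t 0 sh ?_ ?_
  · exact t.le_monotone (show (-1:ℤ) ≤ 0 by omega) _ (t.le_shift 0 1 (-1) (by omega) A hA)
  · exact (hTF.1 _ hB).1

lemma QQ_shift_neg_one {Z : C} (hZ : QQ t F Z) : QQ t F (Z⟦(-1:ℤ)⟧) := by
  obtain ⟨A, B, hA, hB, a, b, c, mem⟩ := hZ
  refine ge2_subset_QQ t T F hTF ?_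
  have sh := Triangle.shift_distinguished _ mem (-1)
  refine ge_ext₂ t 2 sh ?_ ?_
  · show t.ge 2 (A⟦(-1:ℤ)⟧)
    refine ObjectProperty.prop_of_iso (t.ge 2) ((shiftFunctorAdd' C 1 (-2) (-1) (by omega)).app A).symm ?_
    exact t.ge_shift 0 (-2) 2 (by omega) _ (hTF.2.1 _ hA).2
  · exact t.ge_antitone (show (2:ℤ) ≤ 3 by omega) _ (t.ge_shift 2 (-1) 3 (by omega) B hB)

lemma PP_subset_le1 {Z : C} (hZ : PP t T Z) : t.le 1 Z := by
  obtain ⟨A, B, hA, hB, a, b, c, mem⟩ := hZ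
  refine le_ext₂ t 1 mem (t.le_monotone (show (0:ℤ) ≤ 1 by omega) _ hA) ?_
  refine ObjectProperty.prop_of_iso (t.le 1) ((shiftFunctorCompIsoId C (1:ℤ) (-1) (by omega)).app B) ?_
  exact t.le_shift 0 (-1) 1 (by omega) _ (hTF.1 _ hB).1

lemma QQ_subset_ge1 {Z : C} (hZ : QQ t F Z) : t.ge 1 Z := by
  obtain ⟨A, B, hA, hB, a, b, c, mem⟩ := hZ
  refine ge_ext₂ t 1 mem ?_ (t.ge_antitone (show (1:ℤ) ≤ 2 by omega) _ hB)
  refine ObjectProperty.prop_of_iso (t.ge 1) ((shiftFunctorCompIsoId C (1:ℤ) (-1) (by omega)).app A) ?_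
  exact t.ge_shift 0 (-1) 1 (by omega) _ (hTF.2.1 _ hA).2


lemma exists_tri (X : C) :
    ∃ (A B : C) (_ : PP t T A) (_ : QQ t F B) (f : A ⟶ X) (g : X ⟶ B)
      (h : B ⟶ A⟦(1 : ℤ)⟧), Triangle.mk f g h ∈ distTriang C := by
  haveI instT := hTF.2.2.1
  haveI instF := hTF.2.2.2.1
  obtain ⟨X0, X1, hX0, hX1, a₁, b₁, c₁, m₁⟩ := t.exists_triangle X 0 1 rfl
  obtain ⟨W, X2, hW, hX2, a₂, b₂, c₂, m₂⟩ := t.exists_triangle X1 1 2 (by omega)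
  have hWG1 : t.ge 1 W := by
    refine ge_ext₂ t 1 (inv_rot_of_distTriang _ m₂) ?_ hX1
    show t.ge 1 (X2⟦(-1:ℤ)⟧)
    exact t.ge_antitone (by omega) _ (t.ge_shift 2 (-1) 3 (by omega) X2 hX2)
  have hM : heartProp t (W⟦(1:ℤ)⟧) :=
    ⟨t.le_shift 1 1 0 (by omega) W hW, t.ge_shift 1 1 0 (by omega) W hWG1⟩
  obtain ⟨TM, FM, hTM, hFM, u, v, w2, md⟩ := hTF.2.2.2.2.2 _ hM
  have msh := Triangle.shift_distinguished _ md (-1)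
  set S := (CategoryTheory.shiftFunctor (Triangle C) (-1:ℤ)).obj (Triangle.mk u v w2) with hS
  have e : (W⟦(1:ℤ)⟧)⟦(-1:ℤ)⟧ ≅ W := (shiftFunctorCompIsoId C (1:ℤ) (-1) (by omega)).app W
  have h₂₃ : Triangle.mk (e.hom ≫ a₂) b₂ (c₂ ≫ e.inv⟦(1:ℤ)⟧') ∈ distTriang C := by
    refine isomorphic_distinguished _ m₂ _ ?_
    exact Triangle.isoMk _ _ e (Iso.refl X1) (Iso.refl X2) (by show (e.hom ≫ a₂) ≫ 𝟙 X1 = e.hom ≫ a₂; simp)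
      (by show b₂ ≫ 𝟙 X2 = 𝟙 X1 ≫ b₂; simp)
      (by show (c₂ ≫ e.inv⟦(1:ℤ)⟧') ≫ e.hom⟦(1:ℤ)⟧' = 𝟙 X2 ≫ c₂; simp only [assoc, ← Functor.map_comp, e.inv_hom_id]; simp)
  obtain ⟨B, g', h', hB⟩ := distinguished_cocone_triangle (S.mor₁ ≫ (e.hom ≫ a₂))
  have O := someOctahedron rfl msh h₂₃ hB
  have hQB : QQ t F B := by
    refine extStar_triangle _ _ O.mem ?_ hX2
    show F ((FM⟦(-1:ℤ)⟧)⟦(1:ℤ)⟧)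
    exact ObjectProperty.prop_of_iso F ((shiftFunctorCompIsoId C (-1:ℤ) 1 (by omega)).app FM).symm hFM
  -- second octahedron
  obtain ⟨Z, p, q, hZ⟩ := distinguished_cocone_triangle (b₁ ≫ g')
  have O₂ := someOctahedron (u₁₂ := b₁) (u₂₃ := g') rfl
    (rot_of_distTriang _ m₁) (rot_of_distTriang _ hB) hZ
  have hPA : PP t T (Z⟦(-1:ℤ)⟧) := by
    have sh2 := Triangle.shift_distinguished _ O₂.mem (-1)
    refine ObjectProperty.prop_of_iso (PP t T) (Iso.refl _) (extStar_triangle _ _ sh2 ?_ ?_)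
    · show t.le 0 ((X0⟦(1:ℤ)⟧)⟦(-1:ℤ)⟧)
      exact ObjectProperty.prop_of_iso (t.le 0)
        ((shiftFunctorCompIsoId C (1:ℤ) (-1) (by omega)).app X0).symm hX0
    · show T ((((TM⟦(-1:ℤ)⟧)⟦(1:ℤ)⟧)⟦(-1:ℤ)⟧)⟦(1:ℤ)⟧)
      refine ObjectProperty.prop_of_iso T (Iso.symm ?_) hTM
      exact ((shiftFunctorCompIsoId C (-1:ℤ) 1 (by omega)).app ((TM⟦(-1:ℤ)⟧)⟦(1:ℤ)⟧)) ≪≫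
        ((shiftFunctorCompIsoId C (-1:ℤ) 1 (by omega)).app TM)
  exact ⟨_, _, hPA, hQB, _, _, _, inv_rot_of_distTriang _ hZ⟩

/-- The tilted t-structure. -/
def tilt : TStructure C where
  le n X := PP t T (X⟦n⟧)
  ge n X := QQ t F (X⟦n-1⟧)
  le_isClosedUnderIsomorphisms n := by
    constructor
    intro X Y f hX
    exact ObjectProperty.prop_of_iso (PP t T) ((shiftFunctor C n).mapIso f) hX
  ge_isClosedUnderIsomorphisms n := by
    constructor
    intro X Y f hX
    exact ObjectProperty.prop_of_iso (QQ t F) ((shiftFunctor C (n-1)).mapIso f) hX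
  le_shift n a n' h X hX :=
    ObjectProperty.prop_of_iso (PP t T) ((shiftFunctorAdd' C a n' n h).app X) hX
  ge_shift n a n' h X hX :=
    ObjectProperty.prop_of_iso (QQ t F) ((shiftFunctorAdd' C a (n'-1) (n-1) (by omega)).app X) hX
  zero' {X Y} f hX hY := by
    have hX' : PP t T X := ObjectProperty.prop_of_iso (PP t T) ((shiftFunctorZero C ℤ).app X) hX
    have hY' : QQ t F Y := by
      have hY2 : QQ t F (Y⟦(1:ℤ)-1⟧) := hY
      rw [show (1:ℤ)-1 = 0 by omega] at hY2
      exact ObjectProperty.prop_of_iso (QQ t F) ((shiftFunctorZero C ℤ).app Y) hY2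
    exact hom_PP_QQ t T F hTF hX' hY' f
  le_zero_le X hX := by
    have h0 : PP t T X := ObjectProperty.prop_of_iso (PP t T) ((shiftFunctorZero C ℤ).app X) hX
    exact ObjectProperty.prop_of_iso (PP t T) (Iso.refl _) (PP_shift_one t T F hTF h0)
  ge_one_le X hX := by
    have hX2 : QQ t F (X⟦(1:ℤ)-1⟧) := hX
    rw [show (1:ℤ)-1 = 0 by omega] at hX2
    have h0 : QQ t F X := ObjectProperty.prop_of_iso (QQ t F) ((shiftFunctorZero C ℤ).app X) hX2
    have h3 := QQ_shift_neg_one t T F hTF h0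
    show QQ t F (X⟦(0:ℤ)-1⟧)
    rw [show (0:ℤ)-1 = -1 by omega]
    exact h3
  exists_triangle_zero_one A := by
    obtain ⟨A', B', hA', hB', f, g, h, mem⟩ := exists_tri t T F hTF A
    refine ⟨A', B', ?_, ?_, f, g, h, mem⟩
    · exact ObjectProperty.prop_of_iso (PP t T) ((shiftFunctorZero C ℤ).app A').symm hA'
    · show QQ t F (B'⟦(1:ℤ)-1⟧)
      rw [show (1:ℤ)-1 = 0 by omega]
      exact ObjectProperty.prop_of_iso (QQ t F) ((shiftFunctorZero C ℤ).app B').symm hB'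

lemma tilt_LE_eq (n : ℤ) (X : C) : (tilt t T F hTF).le n X ↔ PP t T (X⟦n⟧) := Iff.rfl

lemma tilt_LE0 : (tilt t T F hTF).le 0 = PP t T := by
  funext X
  rw [eq_iff_iff, tilt_LE_eq]
  exact ObjectProperty.prop_iff_of_iso (PP t T) ((shiftFunctorZero C ℤ).app X)

lemma tilt_GE1 : (tilt t T F hTF).ge 1 = QQ t F := by
  funext X
  rw [eq_iff_iff]
  show QQ t F (X⟦(1:ℤ)-1⟧) ↔ QQ t F X
  rw [show (1:ℤ)-1 = 0 by omega]
  exact ObjectProperty.prop_iff_of_iso (QQ t F) ((shiftFunctorZero C ℤ).app X)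

lemma tilt_sandwich₁ : t.le 0 ≤ (tilt t T F hTF).le 0 := by
  intro X hX
  rw [tilt_LE0]
  exact le0_subset_PP t T F hTF hX

lemma tilt_sandwich₂ : (tilt t T F hTF).le 0 ≤ t.le 1 := by
  intro X hX
  rw [tilt_LE0] at hX
  exact PP_subset_le1 t T F hTF hX


lemma char_T {M : C} (hM : heartProp t M)
    (hhom : ∀ N, F N → ∀ f : M ⟶ N, f = 0) : T M := by
  haveI instT := hTF.2.2.1
  obtain ⟨TM, FM, hTM, hFM, u, v, w2, md⟩ := hTF.2.2.2.2.2 M hM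
  obtain ⟨φ, hφ⟩ := Triangle.yoneda_exact₂ _ (rot_of_distTriang _ md) (𝟙 FM)
    ((comp_id _).trans (hhom FM hFM v))
  have hφ0 : φ = 0 := t_zero t (show (-1:ℤ) < 0 by omega) φ
    (t.le_shift 0 1 (-1) (by omega) _ (hTF.1 _ hTM).1) (hTF.2.1 _ hFM).2
  have hFM0 : IsZero FM := by rw [IsZero.iff_id_eq_zero, hφ, hφ0, comp_zero]; rfl
  have : IsIso u := (Triangle.isZero₃_iff_isIso₁ _ md).1 hFM0
  exact ObjectProperty.prop_of_isIso T u hTM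

lemma char_F {N : C} (hN : heartProp t N)
    (hhom : ∀ M, T M → ∀ f : M ⟶ N, f = 0) : F N := by
  haveI instF := hTF.2.2.2.1
  obtain ⟨TN, FN, hTN, hFN, u, v, w2, md⟩ := hTF.2.2.2.2.2 N hN
  obtain ⟨φ, hφ⟩ := Triangle.coyoneda_exact₂ _ (inv_rot_of_distTriang _ md) (𝟙 TN)
    ((id_comp _).trans (hhom TN hTN u))
  have hφ0 : φ = 0 := t_zero t (show (0:ℤ) < 1 by omega) φ
    (hTF.1 _ hTN).1 (t.ge_shift 0 (-1) 1 (by omega) _ (hTF.2.1 _ hFN).2)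
  have hTN0 : IsZero TN := by rw [IsZero.iff_id_eq_zero, hφ, hφ0, zero_comp]; rfl
  have : IsIso v := (Triangle.isZero₁_iff_isIso₂ _ md).1 hTN0
  exact ObjectProperty.prop_of_iso F (asIso v).symm hFN

lemma T_mem_PP_shift {M : C} (hM : T M) : PP t T (M⟦(-1:ℤ)⟧) := by
  haveI instT := hTF.2.2.1
  refine extStar_triangle _ _ (contractible_distinguished₁ (M⟦(-1:ℤ)⟧))
    (le_of_isZero t 0 (isZero_zero C)) ?_
  exact ObjectProperty.prop_of_iso T ((shiftFunctorCompIsoId C (-1:ℤ) 1 (by omega)).app M).symm hM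

lemma F_mem_QQ_shift {N : C} (hN : F N) : QQ t F (N⟦(-1:ℤ)⟧) := by
  haveI instF := hTF.2.2.2.1
  refine extStar_triangle _ _ (contractible_distinguished (N⟦(-1:ℤ)⟧)) ?_
    (ge_of_isZero t 2 (isZero_zero C))
  exact ObjectProperty.prop_of_iso F ((shiftFunctorCompIsoId C (-1:ℤ) 1 (by omega)).app N).symm hN

end withTF

end torsion

section inverse

variable (t : TStructure C) (t₂ : TStructure C)

/-- torsion class from a sandwiched t-structure -/
def Tof : C → Prop := fun M => heartProp t M ∧ t₂.le 0 (M⟦(-1:ℤ)⟧)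

/-- torsion-free class from a sandwiched t-structure -/
def Fof : C → Prop := fun N => heartProp t N ∧ t₂.ge 1 (N⟦(-1:ℤ)⟧)

variable (hs₁ : t.le 0 ≤ t₂.le 0) (hs₂ : t₂.le 0 ≤ t.le 1)

include hs₁ hs₂ in
lemma inv_torsion : IsTorsionPair t (Tof t t₂) (Fof t t₂) := by
  refine ⟨fun X hX => hX.1, fun X hX => hX.1, ?_, ?_, ?_, ?_⟩
  · constructor
    intro X Y e h
    exact ⟨⟨ObjectProperty.prop_of_iso (t.le 0) e h.1.1, ObjectProperty.prop_of_iso (t.ge 0) e h.1.2⟩,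
      ObjectProperty.prop_of_iso (t₂.le 0) ((shiftFunctor C (-1:ℤ)).mapIso e) h.2⟩
  · constructor
    intro X Y e h
    exact ⟨⟨ObjectProperty.prop_of_iso (t.le 0) e h.1.1, ObjectProperty.prop_of_iso (t.ge 0) e h.1.2⟩,
      ObjectProperty.prop_of_iso (t₂.ge 1) ((shiftFunctor C (-1:ℤ)).mapIso e) h.2⟩
  · intro A B f hA hB
    rw [← shift_eq_zero_iff f (-1)]
    exact t₂.zero' _ hA.2 hB.2
  · intro M hM
    obtain ⟨A, B, hA, hB, f, g, h, mem⟩ := t₂.exists_triangle M (-1) 0 (by omega)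
    have hALE : t₂.le 0 (A⟦(-1:ℤ)⟧) := t₂.le_shift (-1) (-1) 0 (by omega) A hA
    have hAL0 : t.le 0 A :=
      ObjectProperty.prop_of_iso (t.le 0) ((shiftFunctorCompIsoId C (-1:ℤ) 1 (by omega)).app A)
        (t.le_shift 1 1 0 (by omega) _ (hs₂ _ hALE))
    have hAG0 : t.ge 0 A := by
      rw [ge_iff_orth]
      intro W hW w
      obtain ⟨φ, hφ⟩ := Triangle.coyoneda_exact₂ _ (inv_rot_of_distTriang _ mem) w
        (by exact t_zero t (show (-1:ℤ) < 0 by omega) _ hW hM.2)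
      have hφ0 : φ = 0 := t₂.zero' φ
        (hs₁ _ (t.le_monotone (show (-1:ℤ) ≤ 0 by omega) _ hW))
        (t₂.ge_shift 0 (-1) 1 (by omega) B hB)
      rw [hφ, hφ0, zero_comp]; rfl
    have hBG0 : t.ge 0 B := by
      rw [ge_iff_orth]
      intro W hW w
      have hWt₂ : t₂.le (-1) W :=
        ObjectProperty.prop_of_iso (t₂.le (-1)) ((shiftFunctorCompIsoId C (-1:ℤ) 1 (by omega)).app W)
          (t₂.le_shift 0 1 (-1) (by omega) _ (hs₁ _ (t.le_shift (-1) (-1) 0 (by omega) W hW)))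
      exact t_zero t₂ (show (-1:ℤ) < 0 by omega) w hWt₂ hB
    have hBL0 : t.le 0 B := by
      rw [le_iff_orth]
      intro Y hY w
      obtain ⟨φ, hφ⟩ := Triangle.yoneda_exact₃ _ mem w
        (t_zero t (show (0:ℤ) < 1 by omega) _ hM.1 hY)
      have hφ0 : φ = 0 := t_zero t (show (-1:ℤ) < 1 by omega) φ
        (t.le_shift 0 1 (-1) (by omega) A hAL0) hY
      rw [hφ, hφ0, comp_zero]; rfl
    exact ⟨A, B, ⟨⟨hAL0, hAG0⟩, hALE⟩,
      ⟨⟨hBL0, hBG0⟩, t₂.ge_shift 0 (-1) 1 (by omega) B hB⟩, f, g, h, mem⟩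

include hs₁ hs₂ in
lemma PP_Tof_eq : PP t (Tof t t₂) = t₂.le 0 := by
  funext X
  rw [eq_iff_iff]
  constructor
  · rintro ⟨A, B, hA, hB, f, g, h, mem⟩
    have hB2 : t₂.le 0 B :=
      ObjectProperty.prop_of_iso (t₂.le 0) ((shiftFunctorCompIsoId C (1:ℤ) (-1) (by omega)).app B) hB.2
    exact le_ext₂ t₂ 0 mem (hs₁ _ hA) hB2
  · intro hX
    obtain ⟨A, Y, hA, hY, f, g, h, mem⟩ := t.exists_triangle X 0 1 rfl
    have hAm : t.le (-1) (A⟦(1:ℤ)⟧) := t.le_shift 0 1 (-1) (by omega) A hA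
    have hYL1 : t.le 1 Y := le_ext₂ t 1 (rot_of_distTriang _ mem)
      (hs₂ _ hX) (t.le_monotone (show (-1:ℤ) ≤ 1 by omega) _ hAm)
    have hYt₂ : t₂.le 0 Y := le_ext₂ t₂ 0 (rot_of_distTriang _ mem) hX
      (hs₁ _ (t.le_monotone (show (-1:ℤ) ≤ 0 by omega) _ hAm))
    refine ⟨A, Y, hA, ?_, f, g, h, mem⟩
    refine ⟨⟨t.le_shift 1 1 0 (by omega) Y hYL1, t.ge_shift 1 1 0 (by omega) Y hY⟩, ?_⟩
    exact ObjectProperty.prop_of_iso (t₂.le 0) ((shiftFunctorCompIsoId C (1:ℤ) (-1) (by omega)).app Y).symm hYt₂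

include hs₁ hs₂ in
lemma tilt_inv_eq : tilt t (Tof t t₂) (Fof t t₂) (inv_torsion t t₂ hs₁ hs₂) = t₂ := by
  refine tstructure_ext_of_le ?_
  funext n X
  rw [eq_iff_iff]
  show PP t (Tof t t₂) (X⟦n⟧) ↔ t₂.le n X
  rw [PP_Tof_eq t t₂ hs₁ hs₂]
  exact Iff.of_eq (congrFun (t₂.shift_le n 0 n (by omega)) X)

end inverse

section main

variable (t : TStructure C)

/-- The HRS bijection. -/
noncomputable def theEquiv :
    {TF : (C → Prop) × (C → Prop) // IsTorsionPair t TF.1 TF.2} ≃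
    {t₂ : TStructure C // t.le 0 ≤ t₂.le 0 ∧ t₂.le 0 ≤ t.le 1} where
  toFun p := ⟨tilt t p.1.1 p.1.2 p.2, tilt_sandwich₁ t p.1.1 p.1.2 p.2,
    tilt_sandwich₂ t p.1.1 p.1.2 p.2⟩
  invFun q := ⟨(Tof t q.1, Fof t q.1), inv_torsion t q.1 q.2.1 q.2.2⟩
  left_inv p := by
    obtain ⟨⟨T, F⟩, hTF⟩ := p
    refine Subtype.ext (Prod.ext ?_ ?_)
    · funext M
      rw [eq_iff_iff]
      constructor
      · rintro ⟨hM, hP⟩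
        have hP' : PP t T (M⟦(-1:ℤ)⟧) :=
          ObjectProperty.prop_of_iso (PP t T) ((shiftFunctorZero C ℤ).app _) hP
        refine char_T t T F hTF hM ?_
        intro N hN f
        rw [← shift_eq_zero_iff f (-1)]
        exact hom_PP_QQ t T F hTF hP' (F_mem_QQ_shift t T F hTF hN) _
      · intro hM
        refine ⟨hTF.1 M hM, ?_⟩
        show PP t T ((M⟦(-1:ℤ)⟧)⟦(0:ℤ)⟧)
        exact ObjectProperty.prop_of_iso (PP t T) ((shiftFunctorZero C ℤ).app _).symm
          (T_mem_PP_shift t T F hTF hM)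
    · funext N
      rw [eq_iff_iff]
      constructor
      · rintro ⟨hN, hQ⟩
        have hQ2 : QQ t F ((N⟦(-1:ℤ)⟧)⟦(1:ℤ)-1⟧) := hQ
        rw [show (1:ℤ)-1 = 0 by omega] at hQ2
        have hQ' : QQ t F (N⟦(-1:ℤ)⟧) :=
          ObjectProperty.prop_of_iso (QQ t F) ((shiftFunctorZero C ℤ).app _) hQ2
        refine char_F t T F hTF hN ?_
        intro M hM f
        rw [← shift_eq_zero_iff f (-1)]
        exact hom_PP_QQ t T F hTF (T_mem_PP_shift t T F hTF hM) hQ' _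
      · intro hN
        refine ⟨hTF.2.1 N hN, ?_⟩
        show QQ t F ((N⟦(-1:ℤ)⟧)⟦(1:ℤ)-1⟧)
        rw [show (1:ℤ)-1 = 0 by omega]
        exact ObjectProperty.prop_of_iso (QQ t F) ((shiftFunctorZero C ℤ).app _).symm
          (F_mem_QQ_shift t T F hTF hN)
  right_inv q := Subtype.ext (tilt_inv_eq t q.1 q.2.1 q.2.2)

end main

end HRSAux

/-- Torsion pairs in the heart of `t₁` are in bijection with the t-structures
`t₂` with `D₁^{≤0} ⊆ D₂^{≤0} ⊆ D₁^{≤1}`, via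
`D₂^{≤0} = D₁^{≤0} ∗ Σ⁻¹T` and `D₂^{≥1} = Σ⁻¹F ∗ D₁^{≥2}`. -/
theorem stmt_9 (t₁ : TStructure C) :
    ∃ e : {TF : (C → Prop) × (C → Prop) // IsTorsionPair t₁ TF.1 TF.2} ≃
        {t₂ : TStructure C // t₁.le 0 ≤ t₂.le 0 ∧ t₂.le 0 ≤ t₁.le 1},
      ∀ p, ((e p : TStructure C)).le 0 =
            ExtStar (t₁.le 0) (fun X => (p : (C → Prop) × (C → Prop)).1 (X⟦(1 : ℤ)⟧)) ∧
          ((e p : TStructure C)).ge 1 =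
            ExtStar (fun X => (p : (C → Prop) × (C → Prop)).2 (X⟦(1 : ℤ)⟧)) (t₁.ge 2) := by
  refine ⟨HRSAux.theEquiv t₁, ?_⟩
  rintro ⟨⟨T, F⟩, hTF⟩
  exact ⟨HRSAux.tilt_LE0 t₁ T F hTF, HRSAux.tilt_GE1 t₁ T F hTF⟩
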